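/- Let α ∈ (0,1) and define λ₀ = (1 − α/2) ω₀^{(α)} and λ_k = (1 − α/2) ω_k^{(α)} + (α/2) ω_{k−1}^{(α)} for k ≥ 1, where ω_k^{(α)} = (−1)^k(−α choose k). Then for every positive integer k and every real vector (v₁,…,v_k), Σ_{n=0}^{k−1} ( Σ_{p=0}^{n} λ_p v_{n+1−p} ) v_{n+1} ≥ 0. -/

import Mathlib

/-- Coefficients `ω_k^{(α)} = (-1)^k (-α choose k)`. -/
noncomputable def omegaG (α : ℝ) (k : ℕ) : ℝ :=
  (-1) ^ k * ((∏ i ∈ Finset.range k, (-α - i)) / (k.factorial : ℝ))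

/-- Weighted coefficients `λ_k` for the diffusion-wave scheme. -/
noncomputable def lamW (α : ℝ) : ℕ → ℝ
  | 0 => (1 - α / 2) * omegaG α 0
  | k + 1 => (1 - α / 2) * omegaG α (k + 1) + α / 2 * omegaG α k


open MeasureTheory intervalIntegral Finset Real

-- real beta integral
lemma realBeta {p q : ℝ} (hp : 0 < p) (hq : 0 < q) :
    ∫ x in (0:ℝ)..1, x ^ (p - 1) * (1 - x) ^ (q - 1) =
      Real.Gamma p * Real.Gamma q / Real.Gamma (p + q) := by
  have h1 : Complex.Gamma p * Complex.Gamma q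
      = Complex.Gamma (p + q) * Complex.betaIntegral p q :=
    Complex.Gamma_mul_Gamma_eq_betaIntegral (by simpa using hp) (by simpa using hq)
  have h2 : Complex.betaIntegral (p : ℂ) (q : ℂ)
      = ((∫ x in (0:ℝ)..1, x ^ (p - 1) * (1 - x) ^ (q - 1) : ℝ) : ℂ) := by
    rw [Complex.betaIntegral,
      ← show (∫ x in (0:ℝ)..1, ((x ^ (p - 1) * (1 - x) ^ (q - 1) : ℝ) : ℂ))
          = ((∫ x in (0:ℝ)..1, x ^ (p - 1) * (1 - x) ^ (q - 1) : ℝ) : ℂ) from by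
        exact_mod_cast RCLike.intervalIntegral_ofReal (𝕜 := ℂ)
          (f := fun x : ℝ => x ^ (p - 1) * (1 - x) ^ (q - 1))]
    apply intervalIntegral.integral_congr
    intro x hx
    rw [Set.uIcc_of_le (by norm_num : (0:ℝ) ≤ 1)] at hx
    have hx0 : (0:ℝ) ≤ x := hx.1
    have hx1 : (0:ℝ) ≤ 1 - x := by linarith [hx.2]
    simp only
    rw [show ((p:ℂ) - 1) = ((p - 1 : ℝ) : ℂ) by push_cast; ring,
      show ((q:ℂ) - 1) = ((q - 1 : ℝ) : ℂ) by push_cast; ring,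
      show ((1:ℂ) - (x:ℂ)) = ((1 - x : ℝ) : ℂ) by push_cast; ring,
      ← Complex.ofReal_cpow hx0, ← Complex.ofReal_cpow hx1, ← Complex.ofReal_mul]
  have h3 : Real.Gamma (p + q) ≠ 0 := (Real.Gamma_pos_of_pos (by linarith)).ne'
  have h4 : (Real.Gamma p * Real.Gamma q : ℝ)
      = Real.Gamma (p + q) * ∫ x in (0:ℝ)..1, x ^ (p - 1) * (1 - x) ^ (q - 1) := by
    have := h1
    rw [h2, ← Complex.ofReal_add, Complex.Gamma_ofReal, Complex.Gamma_ofReal,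
      Complex.Gamma_ofReal, ← Complex.ofReal_mul, ← Complex.ofReal_mul] at this
    exact_mod_cast this
  field_simp
  linarith [h4]

-- integrability
lemma betaIntble {p q : ℝ} (hp : 0 < p) (hq : 0 < q) :
    IntervalIntegrable (fun x : ℝ => x ^ (p - 1) * (1 - x) ^ (q - 1))
      MeasureTheory.volume 0 1 := by
  have hc := Complex.betaIntegral_convergent (u := (p:ℂ)) (v := (q:ℂ))
    (by simpa using hp) (by simpa using hq)
  rw [intervalIntegrable_iff_integrableOn_Ioc_of_le (by norm_num : (0:ℝ) ≤ 1)] at hc ⊢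
  have hre := hc.re
  have heq : Set.EqOn (fun x : ℝ => ((x:ℂ) ^ ((p:ℂ) - 1) * ((1:ℂ) - x) ^ ((q:ℂ) - 1)).re)
      (fun x : ℝ => x ^ (p - 1) * (1 - x) ^ (q - 1)) (Set.Ioc 0 1) := by
    intro x hx
    have hx0 : (0:ℝ) ≤ x := le_of_lt hx.1
    have hx1 : (0:ℝ) ≤ 1 - x := by linarith [hx.2]
    simp only
    rw [show ((p:ℂ) - 1) = ((p - 1 : ℝ) : ℂ) by push_cast; ring,
      show ((q:ℂ) - 1) = ((q - 1 : ℝ) : ℂ) by push_cast; ring,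
      show ((1:ℂ) - (x:ℂ)) = ((1 - x : ℝ) : ℂ) by push_cast; ring,
      ← Complex.ofReal_cpow hx0, ← Complex.ofReal_cpow hx1, ← Complex.ofReal_mul,
      Complex.ofReal_re]
  exact MeasureTheory.IntegrableOn.congr_fun hre heq measurableSet_Ioc

lemma omegaG_eq (α : ℝ) (p : ℕ) :
    omegaG α p = (∏ i ∈ Finset.range p, (α + i)) / (p.factorial : ℝ) := by
  unfold omegaG
  rw [show ∏ i ∈ Finset.range p, (-α - (i:ℝ)) = ∏ i ∈ Finset.range p, (-1) * (α + i) by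
    apply Finset.prod_congr rfl; intros; ring]
  rw [Finset.prod_mul_distrib, Finset.prod_const, Finset.card_range]
  have hpow : ((-1:ℝ))^(p*2) = 1 := by
    exact Even.neg_one_pow ⟨p, by ring⟩
  field_simp
  ring_nf
  rw [hpow]
  ring

lemma Gamma_prod {α : ℝ} (hα : 0 < α) (p : ℕ) :
    Real.Gamma (α + p) = (∏ i ∈ Finset.range p, (α + i)) * Real.Gamma α := by
  induction p with
  | zero => simp
  | succ n ih =>
    have h1 : α + (n + 1 : ℕ) = (α + n) + 1 := by push_cast; ring
    rw [h1, Real.Gamma_add_one (by positivity), ih, Finset.prod_range_succ]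
    ring

lemma mom0 {α : ℝ} (hα : α ∈ Set.Ioo (0:ℝ) 1) (p : ℕ) :
    ∫ x in (0:ℝ)..1, x ^ (α + p - 1) * (1 - x) ^ (-α)
      = omegaG α p * (Real.pi / Real.sin (Real.pi * α)) := by
  obtain ⟨h0, h1⟩ := hα
  have hb := realBeta (p := α + p) (q := 1 - α) (by positivity) (by linarith)
  rw [show (1:ℝ) - α - 1 = -α by ring] at hb
  rw [hb, Gamma_prod h0 p, show α + (p:ℝ) + (1 - α) = (p:ℝ) + 1 by ring,
    Real.Gamma_nat_eq_factorial, omegaG_eq]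
  have hrefl : Real.Gamma α * Real.Gamma (1 - α) = Real.pi / Real.sin (Real.pi * α) :=
    Real.Gamma_mul_Gamma_one_sub α
  have : (∏ i ∈ Finset.range p, (α + i)) * Real.Gamma α * Real.Gamma (1 - α) / (p.factorial:ℝ)
      = ((∏ i ∈ Finset.range p, (α + i)) / (p.factorial:ℝ))
        * (Real.Gamma α * Real.Gamma (1 - α)) := by ring
  rw [this, hrefl]

lemma mom {α : ℝ} (hα : α ∈ Set.Ioo (0:ℝ) 1) (p : ℕ) :
    ∫ x in (0:ℝ)..1, (x ^ (α - 1) * (1 - x) ^ (-α)) * x ^ p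
      = omegaG α p * (Real.pi / Real.sin (Real.pi * α)) := by
  rw [← mom0 hα p]
  apply intervalIntegral.integral_congr
  intro x hx
  rw [Set.uIcc_of_le (by norm_num : (0:ℝ) ≤ 1)] at hx
  rcases eq_or_lt_of_le hx.1 with h | h
  · -- x = 0
    subst_vars
    rcases Nat.eq_zero_or_pos p with hp | hp
    · subst hp; simp
    · obtain ⟨ha0, ha1⟩ := hα
      have hp1 : (1:ℝ) ≤ (p:ℝ) := by exact_mod_cast hp
      simp only
      rw [Real.zero_rpow (ne_of_gt (by linarith) : α + (p:ℝ) - 1 ≠ 0),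
        zero_pow hp.ne', mul_zero, zero_mul]
  · simp only
    rw [show α + p - 1 = (α - 1) + (p:ℝ) by ring, Real.rpow_add h,
      Real.rpow_natCast]
    ring

lemma momInt {α : ℝ} (hα : α ∈ Set.Ioo (0:ℝ) 1) (p : ℕ) :
    IntervalIntegrable (fun x : ℝ => (x ^ (α - 1) * (1 - x) ^ (-α)) * x ^ p)
      MeasureTheory.volume 0 1 := by
  obtain ⟨h0, h1⟩ := hα
  have hb := betaIntble (p := α + p) (q := 1 - α) (by positivity) (by linarith)
  rw [show (1:ℝ) - α - 1 = -α by ring] at hb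
  rw [intervalIntegrable_iff_integrableOn_Ioc_of_le (by norm_num : (0:ℝ) ≤ 1)] at hb ⊢
  apply MeasureTheory.IntegrableOn.congr_fun hb ?_ measurableSet_Ioc
  intro x hx
  simp only
  rw [show α + p - 1 = (α - 1) + (p:ℝ) by ring, Real.rpow_add hx.1, Real.rpow_natCast]
  ring

noncomputable def Ufun (v : ℕ → ℝ) (m : ℕ) (x : ℝ) : ℝ :=
  ∑ p ∈ Finset.range m, x ^ p * v (m - p)

noncomputable def ufun (α : ℝ) (v : ℕ → ℝ) (m : ℕ) : ℝ :=
  ∑ p ∈ Finset.range m, omegaG α p * v (m - p)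

lemma wU_eq_sum (α : ℝ) (v : ℕ → ℝ) (m : ℕ) :
    (fun x : ℝ => (x ^ (α - 1) * (1 - x) ^ (-α)) * Ufun v m x)
      = fun x : ℝ => ∑ p ∈ Finset.range m,
          ((x ^ (α - 1) * (1 - x) ^ (-α)) * x ^ p) * v (m - p) := by
  funext x
  rw [Ufun, Finset.mul_sum]
  apply Finset.sum_congr rfl
  intros; ring

lemma wU_intble {α : ℝ} (hα : α ∈ Set.Ioo (0:ℝ) 1) (v : ℕ → ℝ) (m : ℕ) :
    IntervalIntegrable (fun x : ℝ => (x ^ (α - 1) * (1 - x) ^ (-α)) * Ufun v m x)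
      MeasureTheory.volume 0 1 := by
  rw [wU_eq_sum]
  have := IntervalIntegrable.sum (μ := MeasureTheory.volume) (a := (0:ℝ)) (b := 1)
    (Finset.range m)
    (f := fun p => fun x : ℝ => ((x ^ (α - 1) * (1 - x) ^ (-α)) * x ^ p) * v (m - p))
    (fun p _ => (momInt hα p).mul_const _)
  rw [Finset.sum_fn] at this
  exact this

lemma u_int {α : ℝ} (hα : α ∈ Set.Ioo (0:ℝ) 1) (v : ℕ → ℝ) (m : ℕ) :
    ufun α v m * (Real.pi / Real.sin (Real.pi * α))
      = ∫ x in (0:ℝ)..1, (x ^ (α - 1) * (1 - x) ^ (-α)) * Ufun v m x := by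
  rw [show (fun x : ℝ => (x ^ (α - 1) * (1 - x) ^ (-α)) * Ufun v m x)
    = fun x : ℝ => ∑ p ∈ Finset.range m,
        ((x ^ (α - 1) * (1 - x) ^ (-α)) * x ^ p) * v (m - p) from wU_eq_sum α v m,
    intervalIntegral.integral_finset_sum (fun p _ => (momInt hα p).mul_const _)]
  have heach : ∀ p, (∫ x in (0:ℝ)..1, ((x ^ (α - 1) * (1 - x) ^ (-α)) * x ^ p) * v (m - p))
      = (omegaG α p * (Real.pi / Real.sin (Real.pi * α))) * v (m - p) := by
    intro p
    rw [intervalIntegral.integral_mul_const, mom hα p]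
  rw [Finset.sum_congr rfl (fun p _ => heach p), ufun, Finset.sum_mul]
  apply Finset.sum_congr rfl
  intros; ring

lemma vU (v : ℕ → ℝ) (n : ℕ) (x : ℝ) :
    v (n + 1) = Ufun v (n + 1) x - x * Ufun v n x := by
  have h : Ufun v (n + 1) x = v (n + 1) + x * Ufun v n x := by
    rw [Ufun, Finset.sum_range_succ']
    simp only [Nat.succ_sub_succ, pow_zero, one_mul, Nat.sub_zero]
    rw [Ufun, Finset.mul_sum]
    rw [Finset.sum_congr rfl (fun p _ => by rw [pow_succ]; ring : ∀ p ∈ Finset.range n,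
      x ^ (p+1) * v (n - p) = x * (x ^ p * v (n - p)))]
    ring
  rw [h]; ring

lemma u_rec (α : ℝ) (v : ℕ → ℝ) (n : ℕ) :
    ∑ p ∈ Finset.range (n + 1), lamW α p * v (n + 1 - p)
      = (1 - α/2) * ufun α v (n + 1) + α/2 * ufun α v n := by
  have hu1 : ufun α v (n+1)
      = (∑ p ∈ Finset.range n, omegaG α (p+1) * v (n - p)) + omegaG α 0 * v (n+1) := by
    rw [ufun, Finset.sum_range_succ']
    simp [Nat.succ_sub_succ]
  rw [Finset.sum_range_succ', hu1, ufun]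
  simp only [Nat.succ_sub_succ, Nat.sub_zero, lamW]
  rw [Finset.sum_congr rfl (fun p _ => by ring : ∀ p ∈ Finset.range n,
    ((1 - α / 2) * omegaG α (p + 1) + α / 2 * omegaG α p) * v (n - p)
      = (1 - α/2) * (omegaG α (p+1) * v (n-p)) + α/2 * (omegaG α p * v (n-p))),
    Finset.sum_add_distrib, ← Finset.mul_sum, ← Finset.mul_sum]
  ring

lemma sos_identity (α x U1 U0 : ℝ) :
    ((1 - α/2) * U1 + α/2 * U0) * (U1 - x * U0)
      = (2 - α + α*x)/4 * (U1^2 - U0^2) + (1-x)/4 * (U1 + U0)^2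
        + (1-α)*(1+x)/4 * (U1 - U0)^2 := by ring

theorem quadratic_form_nonneg_wave (α : ℝ) (hα : α ∈ Set.Ioo (0 : ℝ) 1)
    (k : ℕ) (hk : 0 < k) (v : ℕ → ℝ) :
    0 ≤ ∑ n ∈ Finset.range k,
        (∑ p ∈ Finset.range (n + 1), lamW α p * v (n + 1 - p)) * v (n + 1) := by
  obtain ⟨ha0, ha1⟩ := hα
  have hα' : α ∈ Set.Ioo (0:ℝ) 1 := ⟨ha0, ha1⟩
  set C := Real.pi / Real.sin (Real.pi * α) with hCdef
  have hsin : 0 < Real.sin (Real.pi * α) :=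
    Real.sin_pos_of_pos_of_lt_pi (by positivity)
      (by nlinarith [Real.pi_pos])
  have hC : 0 < C := div_pos Real.pi_pos hsin
  set Q := ∑ n ∈ Finset.range k,
      (∑ p ∈ Finset.range (n + 1), lamW α p * v (n + 1 - p)) * v (n + 1) with hQdef
  -- step 1: rewrite via ufun
  have h1 : Q = ∑ n ∈ Finset.range k,
      ((1 - α/2) * ufun α v (n + 1) + α/2 * ufun α v n) * v (n + 1) := by
    rw [hQdef]
    exact Finset.sum_congr rfl fun n _ => by rw [u_rec]
  -- step 2: integral representation
  have h2 : Q * C = ∫ x in (0:ℝ)..1, (x ^ (α - 1) * (1 - x) ^ (-α)) *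
      (∑ n ∈ Finset.range k,
        ((1 - α/2) * Ufun v (n + 1) x + α/2 * Ufun v n x) * v (n + 1)) := by
    rw [h1, Finset.sum_mul]
    have hterm : ∀ n ∈ Finset.range k,
        ((1 - α/2) * ufun α v (n + 1) + α/2 * ufun α v n) * v (n + 1) * C
          = ∫ x in (0:ℝ)..1, ((x ^ (α - 1) * (1 - x) ^ (-α)) *
              (((1 - α/2) * Ufun v (n + 1) x + α/2 * Ufun v n x) * v (n + 1))) := by
      intro n _
      have e1 : (fun x : ℝ => (x ^ (α - 1) * (1 - x) ^ (-α)) *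
          (((1 - α/2) * Ufun v (n + 1) x + α/2 * Ufun v n x) * v (n + 1)))
          = fun x : ℝ => (((1 - α/2) * ((x ^ (α - 1) * (1 - x) ^ (-α)) * Ufun v (n + 1) x))
              + (α/2 * ((x ^ (α - 1) * (1 - x) ^ (-α)) * Ufun v n x))) * v (n + 1) := by
        funext x; ring
      rw [e1, intervalIntegral.integral_mul_const, intervalIntegral.integral_add
        ((wU_intble hα' v (n+1)).const_mul _) ((wU_intble hα' v n).const_mul _),
        intervalIntegral.integral_const_mul, intervalIntegral.integral_const_mul,
        ← u_int hα' v (n+1), ← u_int hα' v n]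
      ring
    rw [Finset.sum_congr rfl hterm, ← intervalIntegral.integral_finset_sum]
    · congr 1
      funext x
      rw [Finset.mul_sum]
    · intro n _
      have : (fun x : ℝ => (x ^ (α - 1) * (1 - x) ^ (-α)) *
          (((1 - α/2) * Ufun v (n + 1) x + α/2 * Ufun v n x) * v (n + 1)))
          = fun x : ℝ => (((1 - α/2) * ((x ^ (α - 1) * (1 - x) ^ (-α)) * Ufun v (n + 1) x))
              + (α/2 * ((x ^ (α - 1) * (1 - x) ^ (-α)) * Ufun v n x))) * v (n + 1) := by
        funext x; ring
      rw [this]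
      exact ((((wU_intble hα' v (n+1)).const_mul _).add
        ((wU_intble hα' v n).const_mul _)).mul_const _)
  -- step 3: pointwise nonnegativity
  have h3 : ∀ x ∈ Set.Icc (0:ℝ) 1, 0 ≤ (x ^ (α - 1) * (1 - x) ^ (-α)) *
      (∑ n ∈ Finset.range k,
        ((1 - α/2) * Ufun v (n + 1) x + α/2 * Ufun v n x) * v (n + 1)) := by
    intro x hx
    apply mul_nonneg
    · exact mul_nonneg (Real.rpow_nonneg hx.1 _)
        (Real.rpow_nonneg (by linarith [hx.2]) _)
    have hGeq : ∑ n ∈ Finset.range k,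
        ((1 - α/2) * Ufun v (n + 1) x + α/2 * Ufun v n x) * v (n + 1)
        = (2 - α + α*x)/4 * (Ufun v k x)^2
          + ∑ n ∈ Finset.range k, ((1-x)/4 * (Ufun v (n+1) x + Ufun v n x)^2
              + (1-α)*(1+x)/4 * (Ufun v (n+1) x - Ufun v n x)^2) := by
      have e2 : ∀ n ∈ Finset.range k,
          ((1 - α/2) * Ufun v (n + 1) x + α/2 * Ufun v n x) * v (n + 1)
            = (2 - α + α*x)/4 * ((Ufun v (n+1) x)^2 - (Ufun v n x)^2)
              + ((1-x)/4 * (Ufun v (n+1) x + Ufun v n x)^2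
                + (1-α)*(1+x)/4 * (Ufun v (n+1) x - Ufun v n x)^2) := by
        intro n _
        rw [vU v n x]
        ring
      rw [Finset.sum_congr rfl e2, Finset.sum_add_distrib, ← Finset.mul_sum,
        Finset.sum_range_sub (fun n => (Ufun v n x)^2)]
      have hU0 : Ufun v 0 x = 0 := by simp [Ufun]
      rw [hU0]
      ring
    rw [hGeq]
    have ht : 0 ≤ (2 - α + α*x)/4 := by nlinarith [hx.1, hx.2]
    apply add_nonneg
    · exact mul_nonneg ht (sq_nonneg _)
    apply Finset.sum_nonneg
    intro n _
    apply add_nonneg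
    · apply mul_nonneg (by nlinarith [hx.2] : (0:ℝ) ≤ (1-x)/4) (sq_nonneg _)
    · apply mul_nonneg (by nlinarith [hx.1] : (0:ℝ) ≤ (1-α)*(1+x)/4) (sq_nonneg _)
  have h4 : 0 ≤ Q * C := by
    rw [h2]
    exact intervalIntegral.integral_nonneg (by norm_num) h3
  nlinarith [h4, hC, sq_nonneg Q]
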